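/- Let G be a connected finite simple graph with at least 3 vertices. If α(G) ≤ κ(G), then G has a Hamiltonian cycle. -/

import Mathlib

open SimpleGraph Set

variable {V : Type*}

/-- The independence number of `S` in `G`: the maximum cardinality of a subset of `S`
that is independent in `G`. -/
noncomputable def indepNumOn (G : SimpleGraph V) (S : Set V) : ℕ :=
  sSup {n | ∃ I : Set V, I ⊆ S ∧ I.Pairwise (fun a b => ¬ G.Adj a b) ∧ I.ncard = n}

/-- `I` is a maximum independent subset of `S` in `G`. -/
def MaxIndepOn (G : SimpleGraph V) (S : Set V) (I : Set V) : Prop :=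
  I ⊆ S ∧ I.Pairwise (fun a b => ¬ G.Adj a b) ∧ I.ncard = indepNumOn G S

/-- Two `x`–`y` walks are internally disjoint if they share only `x` and `y`. -/
def InternallyDisjoint (G : SimpleGraph V) {x y : V} (p q : G.Walk x y) : Prop :=
  ∀ v, v ∈ p.support → v ∈ q.support → v = x ∨ v = y

/-- Local connectivity `κ_G(x,y)`: maximum number of pairwise internally disjoint
`x`–`y` paths in `G`. -/
noncomputable def localConn (G : SimpleGraph V) (x y : V) : ℕ :=
  sSup {n | ∃ P : Set (G.Path x y),
    P.Pairwise (fun p q => InternallyDisjoint G p.1 q.1) ∧ P.ncard = n}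

/-- `κ_G(S)`: the minimum of local connectivities over distinct pairs in `S`,
`+∞` if `S` has at most one element. -/
noncomputable def setConn (G : SimpleGraph V) (S : Set V) : ℕ∞ :=
  ⨅ x ∈ S, ⨅ y ∈ S, ⨅ _ : x ≠ y, (localConn G x y : ℕ∞)

/-- Vertex connectivity `κ(G)`: the maximum `k` such that `G` has more than `k`
vertices and removing fewer than `k` vertices always leaves a connected graph. -/
noncomputable def vertexConn (G : SimpleGraph V) [Fintype V] : ℕ :=
  sSup {k | k < Fintype.card V ∧ ∀ X : Finset V, X.card < k →
    (G.induce ((↑X : Set V)ᶜ)).Connected}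

/-- The set of leaves (vertices of degree one) of a subgraph. -/
def subLeaves {G : SimpleGraph V} (T : G.Subgraph) : Set V :=
  {v | v ∈ T.verts ∧ (T.neighborSet v).ncard = 1}

/-- The set of branch vertices (vertices of degree at least three) of a subgraph. -/
def subBranches {G : SimpleGraph V} (T : G.Subgraph) : Set V :=
  {v | v ∈ T.verts ∧ 3 ≤ (T.neighborSet v).ncard}

section CEaux
set_option linter.unusedSectionVars false
variable {G : SimpleGraph V} {x v : V}

lemma indep_le_indepNumOn (G : SimpleGraph V) [Fintype V] (I : Set V)
    (hI : I.Pairwise (fun a b => ¬ G.Adj a b)) : I.ncard ≤ indepNumOn G Set.univ := by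
  apply le_csSup
  · refine ⟨Fintype.card V, ?_⟩
    rintro n ⟨J, -, -, rfl⟩
    simpa [Set.ncard_univ] using Set.ncard_le_ncard (Set.subset_univ J) Set.finite_univ
  · exact ⟨I, Set.subset_univ I, hI, rfl⟩

lemma vertexConn_spec (G : SimpleGraph V) [Fintype V] (h0 : 0 < Fintype.card V)
    (X : Finset V) (hX : X.card < vertexConn G) : (G.induce ((↑X : Set V)ᶜ)).Connected := by
  have hmem : vertexConn G ∈ {k | k < Fintype.card V ∧ ∀ X : Finset V, X.card < k →
      (G.induce ((↑X : Set V)ᶜ)).Connected} := by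
    apply Nat.sSup_mem
    · exact ⟨0, h0, fun X hX => by omega⟩
    · exact ⟨Fintype.card V, fun n hn => hn.1.le⟩
  exact hmem.2 X hX

lemma exists_walk_avoiding {G : SimpleGraph V} {s : Set V}
    (hc : (G.induce s).Connected) {a b : V} (ha : a ∈ s) (hb : b ∈ s) :
    ∃ w : G.Walk a b, ∀ x ∈ w.support, x ∈ s := by
  obtain ⟨w⟩ := hc.preconnected ⟨a, ha⟩ ⟨b, hb⟩
  refine ⟨w.map (SimpleGraph.Embedding.induce s).toHom, ?_⟩
  intro x hx
  change x ∈ (w.map (SimpleGraph.Embedding.induce s).toHom).support at hx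
  rw [SimpleGraph.Walk.support_map, List.mem_map] at hx
  obtain ⟨y, -, rfl⟩ := hx
  exact y.2

lemma triangle_cycle {G : SimpleGraph V} {a b c : V} (hab : G.Adj a b) (hbc : G.Adj b c)
    (hca : G.Adj c a) : (Walk.cons hab (Walk.cons hbc (Walk.cons hca Walk.nil))).IsCycle := by
  rw [Walk.cons_isCycle_iff]
  refine ⟨Walk.IsPath.mk' ?_, ?_⟩
  · simp [hab.ne, hab.ne', hbc.ne, hbc.ne', hca.ne, hca.ne']
  · simp [Sym2.eq_iff, hab.ne, hab.ne', hbc.ne, hbc.ne', hca.ne, hca.ne']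

lemma cycle_of_two_nbrs {G : SimpleGraph V} {u w₁ w₂ : V} (h1 : G.Adj u w₁) (h2 : G.Adj w₂ u)
    (hne : w₁ ≠ w₂) (w : G.Walk w₁ w₂) (hw : ∀ x ∈ w.support, x ≠ u) :
    ∃ (x : V) (c : G.Walk x x), c.IsCycle := by
  classical
  let p := w.bypass
  have hp : p.IsPath := Walk.bypass_isPath w
  have hpu : ∀ x ∈ p.support, x ≠ u := fun x hx => hw x (Walk.support_bypass_subset w hx)
  refine ⟨u, Walk.cons h1 (p.append (Walk.cons h2 Walk.nil)), ?_⟩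
  rw [Walk.cons_isCycle_iff]
  constructor
  · apply Walk.IsPath.mk'
    rw [Walk.support_append]
    simp only [Walk.support_cons, Walk.support_nil, List.tail_cons]
    rw [List.nodup_append]
    refine ⟨hp.support_nodup, List.nodup_singleton u, ?_⟩
    intro x hx
    simp only [List.mem_singleton, forall_eq]
    exact fun h => hpu x hx (h ▸ rfl)
  · rw [Walk.edges_append]
    simp only [Walk.edges_cons, Walk.edges_nil, List.mem_append, List.mem_cons,
      List.not_mem_nil, or_false]
    push_neg
    constructor
    · intro h
      exact hpu u (Walk.fst_mem_support_of_mem_edges p h) rfl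
    · intro h
      rw [Sym2.eq_iff] at h
      rcases h with ⟨h', -⟩ | ⟨-, h'⟩
      · exact h2.ne h'.symm
      · exact hne h'

lemma exists_third [Fintype V] [DecidableEq V] (hcard : 3 ≤ Fintype.card V) (a b : V) :
    ∃ c, c ≠ a ∧ c ≠ b := by
  have : (({a, b} : Finset V)ᶜ).Nonempty := by
    rw [← Finset.card_pos, Finset.card_compl]
    have h2 : ({a, b} : Finset V).card ≤ 2 := Finset.card_insert_le _ _ |>.trans (by simp)
    omega
  obtain ⟨c, hc⟩ := this
  simp only [Finset.mem_compl, Finset.mem_insert, Finset.mem_singleton, not_or] at hc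
  exact ⟨c, hc.1, hc.2⟩

lemma exists_cycle [Fintype V] [DecidableEq V] (G : SimpleGraph V) (hG : G.Connected)
    (hcard : 3 ≤ Fintype.card V) (hακ : indepNumOn G Set.univ ≤ vertexConn G) :
    ∃ (x : V) (c : G.Walk x x), c.IsCycle := by
  by_cases hcomp : ∀ a b : V, a ≠ b → G.Adj a b
  · obtain ⟨a, b, hab⟩ := Fintype.exists_pair_of_one_lt_card (α := V) (by omega)
    obtain ⟨c, hca, hcb⟩ := exists_third hcard a b
    exact ⟨a, _, triangle_cycle (hcomp a b hab) (hcomp b c (Ne.symm hcb)) (hcomp c a hca)⟩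
  · push_neg at hcomp
    obtain ⟨a, b, hab, hnadj⟩ := hcomp
    have h2κ : 2 ≤ vertexConn G := by
      refine le_trans ?_ hακ
      have := indep_le_indepNumOn G {a, b} ?_
      · rwa [Set.ncard_pair hab] at this
      · haveI : Std.Symm (fun a b => ¬ G.Adj a b) := ⟨fun x y h h' => h h'.symm⟩
        refine (Set.pairwise_pair_of_symm (r := fun a b => ¬ G.Adj a b)).mpr (fun _ => hnadj)
    -- find a neighbor x of a
    obtain ⟨w⟩ := hG.preconnected a b
    have hn : ¬w.Nil := Walk.not_nil_of_ne hab
    obtain ⟨x, hax, q, -⟩ := Walk.not_nil_iff.mp hn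
    -- find a second neighbor of a
    obtain ⟨z, hza, hzx⟩ := exists_third hcard a x
    have hconn1 : (G.induce ((↑({x} : Finset V) : Set V)ᶜ)).Connected :=
      vertexConn_spec G (by omega) {x} (by simp; omega)
    obtain ⟨w', hw'⟩ := exists_walk_avoiding hconn1 (a := a) (b := z)
      (by simp [hax.ne]) (by simp [hzx])
    have hn' : ¬w'.Nil := Walk.not_nil_of_ne (Ne.symm hza)
    obtain ⟨x₂, hax₂, q₂, hw'eq⟩ := Walk.not_nil_iff.mp hn'
    have hx₂x : x₂ ≠ x := by
      have : x₂ ∈ w'.support := by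
        rw [hw'eq]; simp [Walk.support_cons]
      simpa using hw' x₂ this
    -- walk from x to x₂ avoiding a
    have hconn2 : (G.induce ((↑({a} : Finset V) : Set V)ᶜ)).Connected :=
      vertexConn_spec G (by omega) {a} (by simp; omega)
    obtain ⟨w'', hw''⟩ := exists_walk_avoiding hconn2 (a := x) (b := x₂)
      (by simp [hax.ne']) (by simp [hax₂.ne'])
    exact cycle_of_two_nbrs hax hax₂.symm (Ne.symm hx₂x) w''
      (fun t ht => by simpa using hw'' t ht)

lemma exists_longest_cycle [Fintype V] (G : SimpleGraph V)
    (h : ∃ (x : V) (c : G.Walk x x), c.IsCycle) :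
    ∃ (x : V) (c : G.Walk x x), c.IsCycle ∧
      ∀ (y : V) (d : G.Walk y y), d.IsCycle → d.length ≤ c.length := by
  classical
  set L : Set ℕ := {n | ∃ (x : V) (c : G.Walk x x), c.IsCycle ∧ c.length = n} with hL
  have hbdd : BddAbove L := by
    refine ⟨Fintype.card V, ?_⟩
    rintro n ⟨x, c, hc, rfl⟩
    have h1 : c.support.tail.length ≤ Fintype.card V := hc.support_nodup.length_le_card
    have h2 : c.support.length = c.length + 1 := c.length_support
    have h3 : c.support.tail.length = c.support.length - 1 := by
      simp [List.length_tail]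
    omega
  have hne : L.Nonempty := by
    obtain ⟨x, c, hc⟩ := h
    exact ⟨c.length, x, c, hc, rfl⟩
  obtain ⟨x, c, hc, hlen⟩ := Nat.sSup_mem hne hbdd
  refine ⟨x, c, hc, fun y d hd => ?_⟩
  rw [hlen]
  exact le_csSup hbdd ⟨y, d, hd, rfl⟩

lemma spanning_cycle_hamiltonian [DecidableEq V] {G : SimpleGraph V} {x : V} {c : G.Walk x x}
    (hc : c.IsCycle) (hall : ∀ v, v ∈ c.support) : c.IsHamiltonianCycle := by
  rw [Walk.isHamiltonianCycle_isCycle_and_isHamiltonian_tail]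
  refine ⟨hc, ?_⟩
  have hmem : ∀ w, w ∈ c.tail.support := by
    intro w
    have hw := hall w
    rw [Walk.support_eq_cons, List.mem_cons] at hw
    rcases hw with rfl | hw
    · exact Walk.end_mem_support c.tail
    · rwa [Walk.support_tail_of_not_nil c hc.not_nil]
  have hpath : c.tail.IsPath := by
    apply Walk.IsPath.mk'
    rw [Walk.support_tail_of_not_nil c hc.not_nil]
    exact hc.support_nodup
  exact hpath.isHamiltonian_of_mem hmem

open Classical in
/-- successor along a closed walk -/
noncomputable def csucc (c : G.Walk x x) (y : V) : V :=
  if h : ∃ d ∈ c.darts, d.fst = y then h.choose.snd else y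

lemma cyc_not_nil {c : G.Walk x x} (hc : c.IsCycle) : ¬c.Nil := by
  rw [Walk.not_nil_iff_lt_length]
  have := hc.three_le_length
  omega

lemma cyc_decomp_lists {c : G.Walk x x} (hc : c.IsCycle) :
    ∃ m' : List V, c.darts.map (·.fst) = x :: m' ∧ c.support.tail = m' ++ [x] := by
  have hsplit : c.darts.map (·.fst) ++ [x] = c.support := c.map_fst_darts_append
  have hcons : c.support = x :: c.support.tail := Walk.support_eq_cons c
  have hlen : c.darts.map (·.fst) ≠ [] := by
    intro h
    have h3 := hc.three_le_length
    have : c.darts.length = c.length := c.length_darts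
    simp only [List.map_eq_nil_iff] at h
    rw [h] at this
    simp at this
    omega
  obtain ⟨a, m', hm⟩ := List.exists_cons_of_ne_nil hlen
  rw [hm] at hsplit
  rw [hcons] at hsplit
  simp only [List.cons_append, List.cons.injEq] at hsplit
  exact ⟨m', by rw [hm, hsplit.1], hsplit.2.symm⟩

lemma cyc_end_mem_tail {c : G.Walk x x} (hc : c.IsCycle) : x ∈ c.support.tail := by
  obtain ⟨m', -, ht⟩ := cyc_decomp_lists hc
  rw [ht]; simp

lemma cyc_mem_support_iff_tail {c : G.Walk x x} (hc : c.IsCycle) {y : V} :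
    y ∈ c.support ↔ y ∈ c.support.tail := by
  constructor
  · intro hy
    rw [Walk.support_eq_cons, List.mem_cons] at hy
    rcases hy with rfl | hy
    · exact cyc_end_mem_tail hc
    · exact hy
  · intro hy
    rw [Walk.support_eq_cons]
    exact List.mem_cons_of_mem _ hy

lemma cyc_map_fst_nodup {c : G.Walk x x} (hc : c.IsCycle) : (c.darts.map (·.fst)).Nodup := by
  obtain ⟨m', hm, ht⟩ := cyc_decomp_lists hc
  have htail := hc.support_nodup
  rw [ht, List.nodup_append] at htail
  rw [hm, List.nodup_cons]
  exact ⟨fun hx => htail.2.2 x hx x (by simp) rfl, htail.1⟩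

lemma cyc_exists_dart {c : G.Walk x x} (hc : c.IsCycle) {y : V} (hy : y ∈ c.support) :
    ∃ d ∈ c.darts, d.fst = y := by
  obtain ⟨m', hm, ht⟩ := cyc_decomp_lists hc
  have hy' : y ∈ c.darts.map (·.fst) := by
    rw [hm]
    rcases (cyc_mem_support_iff_tail hc).mp hy with hy'
    rw [ht, List.mem_append] at hy'
    rcases hy' with h | h
    · exact List.mem_cons_of_mem _ h
    · simp only [List.mem_singleton] at h
      rw [h]; exact List.mem_cons_self
  obtain ⟨d, hd, hfst⟩ := List.mem_map.mp hy'
  exact ⟨d, hd, hfst⟩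

lemma cyc_dart_unique {c : G.Walk x x} (hc : c.IsCycle) {d₁ d₂ : G.Dart}
    (h₁ : d₁ ∈ c.darts) (h₂ : d₂ ∈ c.darts) (h : d₁.fst = d₂.fst) : d₁ = d₂ :=
  List.inj_on_of_nodup_map (cyc_map_fst_nodup hc) h₁ h₂ h

lemma cyc_dart_unique_snd {c : G.Walk x x} (hc : c.IsCycle) {d₁ d₂ : G.Dart}
    (h₁ : d₁ ∈ c.darts) (h₂ : d₂ ∈ c.darts) (h : d₁.snd = d₂.snd) : d₁ = d₂ := by
  have hnodup : (c.darts.map (·.snd)).Nodup := by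
    rw [c.map_snd_darts]; exact hc.support_nodup
  exact List.inj_on_of_nodup_map hnodup h₁ h₂ h

lemma csucc_dart {c : G.Walk x x} (hc : c.IsCycle) {y : V} (hy : y ∈ c.support) :
    ∃ d ∈ c.darts, d.fst = y ∧ d.snd = csucc c y := by
  have h := cyc_exists_dart hc hy
  rw [csucc, dif_pos h]
  exact ⟨h.choose, h.choose_spec.1, h.choose_spec.2, rfl⟩

lemma csucc_eq_of_dart {c : G.Walk x x} (hc : c.IsCycle) {d : G.Dart} (hd : d ∈ c.darts) :
    csucc c d.fst = d.snd := by
  obtain ⟨d', hd', hfst, hsnd⟩ := csucc_dart hc (c.dart_fst_mem_support_of_mem_darts hd)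
  rw [← hsnd, cyc_dart_unique hc hd hd' hfst.symm]

lemma csucc_adj {c : G.Walk x x} (hc : c.IsCycle) {y : V} (hy : y ∈ c.support) :
    G.Adj y (csucc c y) := by
  obtain ⟨d, hd, hfst, hsnd⟩ := csucc_dart hc hy
  subst hfst
  rw [← hsnd]; exact d.adj

lemma csucc_mem {c : G.Walk x x} (hc : c.IsCycle) {y : V} (hy : y ∈ c.support) :
    csucc c y ∈ c.support := by
  obtain ⟨d, hd, hfst, hsnd⟩ := csucc_dart hc hy
  rw [← hsnd]; exact c.dart_snd_mem_support_of_mem_darts hd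

lemma csucc_inj {c : G.Walk x x} (hc : c.IsCycle) {y₁ y₂ : V} (h₁ : y₁ ∈ c.support)
    (h₂ : y₂ ∈ c.support) (h : csucc c y₁ = csucc c y₂) : y₁ = y₂ := by
  obtain ⟨d₁, hd₁, hf₁, hs₁⟩ := csucc_dart hc h₁
  obtain ⟨d₂, hd₂, hf₂, hs₂⟩ := csucc_dart hc h₂
  rw [← hf₁, ← hf₂, cyc_dart_unique_snd hc hd₁ hd₂ (by rw [hs₁, hs₂, h])]

lemma rot1 [DecidableEq V] {c : G.Walk x x} (hc : c.IsCycle) {y : V} (hy : y ∈ c.support) :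
    ∃ q : G.Walk (csucc c y) y, q.length + 1 = c.length ∧ q.support.Nodup ∧
      (∀ v, v ∈ q.support ↔ v ∈ c.support) ∧ (∀ d ∈ q.darts, d ∈ c.darts) := by
  set R := c.rotate y hy with hRdef
  have hRc : R.IsCycle := hc.rotate hy
  obtain ⟨z, hadj, q₀, hR⟩ := Walk.not_nil_iff.mp (cyc_not_nil hRc)
  have hdartmem : (⟨(y, z), hadj⟩ : G.Dart) ∈ c.darts := by
    have h1 : (⟨(y, z), hadj⟩ : G.Dart) ∈ R.darts := by
      rw [hR]; simp [Walk.darts_cons]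
    exact (c.rotate_darts y hy).perm.mem_iff.mp h1
  have hz : csucc c y = z := csucc_eq_of_dart hc hdartmem
  have hlenR : R.length = c.length := by
    have := (c.rotate_darts y hy).perm.length_eq
    rwa [Walk.length_darts, Walk.length_darts] at this
  have hsupR : q₀.support = R.support.tail := by
    rw [hR, Walk.support_cons, List.tail_cons]
  subst hz
  refine ⟨q₀, ?_, ?_, ?_, ?_⟩
  · rw [← hlenR, hR, Walk.length_cons]
  · rw [hsupR]; exact hRc.support_nodup
  · intro v
    rw [hsupR, (Walk.support_rotate c y hy).perm.mem_iff, ← cyc_mem_support_iff_tail hc]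
  · intro d hd
    have h1 : d ∈ R.darts := by rw [hR, Walk.darts_cons]; exact List.mem_cons_of_mem _ hd
    exact (c.rotate_darts y hy).perm.mem_iff.mp h1

lemma rot2 [DecidableEq V] {c : G.Walk x x} (hc : c.IsCycle) {y₁ y₂ : V}
    (hy₁ : y₁ ∈ c.support) (hy₂ : y₂ ∈ c.support) (hne : y₂ ≠ y₁) :
    ∃ (q₁ : G.Walk (csucc c y₁) y₂) (q₂ : G.Walk (csucc c y₂) y₁),
      q₁.length + q₂.length + 2 = c.length ∧ (q₁.support ++ q₂.support).Nodup ∧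
      (∀ v ∈ q₁.support, v ∈ c.support) ∧ (∀ v ∈ q₂.support, v ∈ c.support) := by
  obtain ⟨q, hqlen, hqnodup, hqmem, hqdarts⟩ := rot1 hc hy₁
  have hy₂q : y₂ ∈ q.support := (hqmem y₂).mpr hy₂
  set t := q.takeUntil y₂ hy₂q with ht
  set d := q.dropUntil y₂ hy₂q with hd
  have hspec : t.append d = q := q.take_spec hy₂q
  have hdnn : ¬d.Nil := Walk.not_nil_of_ne hne
  obtain ⟨z, hadj, d', hdeq⟩ := Walk.not_nil_iff.mp hdnn
  have hdartmem : (⟨(y₂, z), hadj⟩ : G.Dart) ∈ c.darts := by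
    apply hqdarts
    apply q.darts_dropUntil_subset hy₂q
    rw [← hd, hdeq]; simp [Walk.darts_cons]
  have hz : csucc c y₂ = z := csucc_eq_of_dart hc hdartmem
  subst hz
  have hsupp : q.support = t.support ++ d'.support := by
    rw [← hspec, Walk.support_append, hdeq, Walk.support_cons, List.tail_cons]
  refine ⟨t, d', ?_, ?_, ?_, ?_⟩
  · have h1 : t.length + d.length = q.length := by
      rw [← hspec, Walk.length_append]
    have h2 : d.length = d'.length + 1 := by rw [hdeq, Walk.length_cons]
    omega
  · rw [← hsupp]; exact hqnodup
  · intro v hv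
    exact (hqmem v).mp (by rw [hsupp]; exact List.mem_append_left _ hv)
  · intro v hv
    exact (hqmem v).mp (by rw [hsupp]; exact List.mem_append_right _ hv)

def Hset (c : G.Walk x x) (v : V) : Set V :=
  {h | ∃ w : G.Walk v h, ∀ t ∈ w.support, t ∉ c.support}

lemma Hset_self {c : G.Walk x x} (hv : v ∉ c.support) : v ∈ Hset c v :=
  ⟨Walk.nil, by simpa using hv⟩

lemma Hset_disj {c : G.Walk x x} {h : V} (hh : h ∈ Hset c v) : h ∉ c.support := by
  obtain ⟨w, hw⟩ := hh
  exact hw h w.end_mem_support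

lemma Hset_path {c : G.Walk x x} {h₁ h₂ : V} [DecidableEq V]
    (hh₁ : h₁ ∈ Hset c v) (hh₂ : h₂ ∈ Hset c v) :
    ∃ p : G.Walk h₁ h₂, p.IsPath ∧ ∀ t ∈ p.support, t ∉ c.support := by
  obtain ⟨w₁, hw₁⟩ := hh₁
  obtain ⟨w₂, hw₂⟩ := hh₂
  refine ⟨(w₁.reverse.append w₂).bypass, Walk.bypass_isPath _, fun t ht => ?_⟩
  have := Walk.support_bypass_subset _ ht
  rw [Walk.mem_support_append_iff] at this
  rcases this with h | h
  · rw [Walk.support_reverse, List.mem_reverse] at h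
    exact hw₁ t h
  · exact hw₂ t h

lemma Hset_extend {c : G.Walk x x} {a b : V} (ha : a ∈ Hset c v) (hadj : G.Adj a b)
    (hb : b ∉ c.support) : b ∈ Hset c v := by
  obtain ⟨w, hw⟩ := ha
  refine ⟨w.append (Walk.cons hadj Walk.nil), fun t ht => ?_⟩
  rw [Walk.mem_support_append_iff] at ht
  rcases ht with h | h
  · exact hw t h
  · simp only [Walk.support_cons, Walk.support_nil, List.mem_cons, List.mem_singleton,
      List.not_mem_nil, or_false] at h
    rcases h with rfl | rfl
    · exact hw t w.end_mem_support
    · exact hb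

lemma first_hit {c : G.Walk x x} :
    ∀ {a y : V} (w : G.Walk a y), a ∈ Hset c v → y ∈ c.support →
      ∃ t ∈ c.support, ∃ h ∈ Hset c v, G.Adj h t ∧ t ∈ w.support := by
  intro a y w
  induction w with
  | nil => exact fun ha hy => absurd hy (Hset_disj ha)
  | @cons a b y hadj q ih =>
    intro ha hy
    by_cases hb : b ∈ c.support
    · exact ⟨b, hb, a, ha, hadj, by simp [Walk.support_cons]⟩
    · obtain ⟨t, ht, h, hh, hadj', htsup⟩ := ih (Hset_extend ha hadj hb) hy
      exact ⟨t, ht, h, hh, hadj', by simp [Walk.support_cons, htsup]⟩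

section surgery
variable [DecidableEq V] {c : G.Walk x x}

lemma B1 (hc : c.IsCycle)
    (hmax : ∀ (y : V) (d : G.Walk y y), d.IsCycle → d.length ≤ c.length)
    {y h₁ h₂ : V} (hy : y ∈ c.support) (hh₁ : h₁ ∈ Hset c v) (hadj₁ : G.Adj h₁ y)
    (hh₂ : h₂ ∈ Hset c v) (hadj₂ : G.Adj h₂ (csucc c y)) : False := by
  obtain ⟨p, hp, hpav⟩ := Hset_path hh₁ hh₂
  obtain ⟨q, hqlen, hqnodup, hqmem, -⟩ := rot1 hc hy
  have hs : G.Adj y (csucc c y) := csucc_adj hc hy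
  let r : G.Walk h₁ y := p.append (Walk.cons hadj₂ q)
  have hrsup : r.support = p.support ++ q.support := by
    show (p.append (Walk.cons hadj₂ q)).support = _
    rw [Walk.support_append, Walk.support_cons, List.tail_cons]
  have hrpath : r.IsPath := by
    apply Walk.IsPath.mk'
    rw [hrsup, List.nodup_append]
    exact ⟨hp.support_nodup, hqnodup, fun t htp t' htq heq => hpav t htp (by subst heq; exact (hqmem t).mp htq)⟩
  have hedge : s(y, h₁) ∉ r.edges := by
    show s(y, h₁) ∉ (p.append (Walk.cons hadj₂ q)).edges
    rw [Walk.edges_append, Walk.edges_cons]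
    intro hmem
    rcases List.mem_append.mp hmem with hmem | hmem
    · exact hpav y (Walk.fst_mem_support_of_mem_edges p hmem) hy
    · rcases List.mem_cons.mp hmem with heq | hmem
      · rw [Sym2.eq_iff] at heq
        rcases heq with ⟨h1, -⟩ | ⟨h1, -⟩
        · exact Hset_disj hh₂ (h1 ▸ hy)
        · exact hs.ne h1
      · exact Hset_disj hh₁ ((hqmem h₁).mp (Walk.snd_mem_support_of_mem_edges q hmem))
  have hcyc : (Walk.cons hadj₁.symm r).IsCycle :=
    (Walk.cons_isCycle_iff r hadj₁.symm).mpr ⟨hrpath, hedge⟩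
  have hlen := hmax y _ hcyc
  have hr : r.length = p.length + (q.length + 1) := by
    show (p.append (Walk.cons hadj₂ q)).length = _
    rw [Walk.length_append, Walk.length_cons]
  rw [Walk.length_cons, hr] at hlen
  omega

lemma B2 (hc : c.IsCycle)
    (hmax : ∀ (y : V) (d : G.Walk y y), d.IsCycle → d.length ≤ c.length)
    {y₁ y₂ a₁ a₂ : V} (hy₁ : y₁ ∈ c.support) (hy₂ : y₂ ∈ c.support) (hne : y₂ ≠ y₁)
    (hha₁ : a₁ ∈ Hset c v) (hadj₁ : G.Adj a₁ y₁)
    (hha₂ : a₂ ∈ Hset c v) (hadj₂ : G.Adj a₂ y₂)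
    (hss : G.Adj (csucc c y₁) (csucc c y₂)) : False := by
  obtain ⟨p, hp, hpav⟩ := Hset_path hha₁ hha₂
  obtain ⟨q₁, q₂, hlen2, hnodup2, hq₁mem, hq₂mem⟩ := rot2 hc hy₁ hy₂ hne
  have hs₁mem : csucc c y₁ ∈ c.support := csucc_mem hc hy₁
  have hs₂mem : csucc c y₂ ∈ c.support := csucc_mem hc hy₂
  let W : G.Walk y₂ y₁ := q₁.reverse.append (Walk.cons hss q₂)
  have hWsup : W.support = q₁.support.reverse ++ q₂.support := by
    show (q₁.reverse.append (Walk.cons hss q₂)).support = _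
    rw [Walk.support_append, Walk.support_cons, List.tail_cons, Walk.support_reverse]
  have hWS : ∀ t ∈ W.support, t ∈ c.support := by
    intro t ht
    rw [hWsup, List.mem_append, List.mem_reverse] at ht
    rcases ht with h | h
    · exact hq₁mem t h
    · exact hq₂mem t h
  have hWnodup : W.support.Nodup := by
    rw [hWsup, List.nodup_append]
    rw [List.nodup_append] at hnodup2
    exact ⟨List.nodup_reverse.mpr hnodup2.1, hnodup2.2.1,
      fun t ht t' ht2 => hnodup2.2.2 t (List.mem_reverse.mp ht) t' ht2⟩
  let r : G.Walk a₁ y₁ := p.append (Walk.cons hadj₂ W)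
  have hrsup : r.support = p.support ++ W.support := by
    show (p.append (Walk.cons hadj₂ W)).support = _
    rw [Walk.support_append, Walk.support_cons, List.tail_cons]
  have hrpath : r.IsPath := by
    apply Walk.IsPath.mk'
    rw [hrsup, List.nodup_append]
    exact ⟨hp.support_nodup, hWnodup, fun t htp t' htq heq => hpav t htp (by subst heq; exact hWS t htq)⟩
  have hedge : s(y₁, a₁) ∉ r.edges := by
    show s(y₁, a₁) ∉ (p.append (Walk.cons hadj₂ W)).edges
    rw [Walk.edges_append, Walk.edges_cons]
    intro hmem
    rcases List.mem_append.mp hmem with hmem | hmem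
    · exact hpav y₁ (Walk.fst_mem_support_of_mem_edges p hmem) hy₁
    · rcases List.mem_cons.mp hmem with heq | hmem
      · rw [Sym2.eq_iff] at heq
        rcases heq with ⟨h1, -⟩ | ⟨h1, -⟩
        · exact Hset_disj hha₂ (h1 ▸ hy₁)
        · exact hne h1.symm
      · -- hmem : s(y₁, a₁) ∈ W.edges
        have : s(y₁, a₁) ∈ q₁.reverse.edges ∨ s(y₁, a₁) = s(csucc c y₁, csucc c y₂) ∨
            s(y₁, a₁) ∈ q₂.edges := by
          have : W.edges = q₁.reverse.edges ++ (s(csucc c y₁, csucc c y₂) :: q₂.edges) := by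
            show (q₁.reverse.append (Walk.cons hss q₂)).edges = _
            rw [Walk.edges_append, Walk.edges_cons]
          rw [this, List.mem_append, List.mem_cons] at hmem
          tauto
        rcases this with h | h | h
        · have := Walk.snd_mem_support_of_mem_edges q₁.reverse h
          rw [Walk.support_reverse, List.mem_reverse] at this
          exact Hset_disj hha₁ (hq₁mem a₁ this)
        · rw [Sym2.eq_iff] at h
          rcases h with ⟨-, h2⟩ | ⟨-, h2⟩
          · exact Hset_disj hha₁ (h2 ▸ hs₂mem)
          · exact Hset_disj hha₁ (h2 ▸ hs₁mem)
        · exact Hset_disj hha₁ (hq₂mem a₁ (Walk.snd_mem_support_of_mem_edges q₂ h))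
  have hcyc : (Walk.cons hadj₁.symm r).IsCycle :=
    (Walk.cons_isCycle_iff r hadj₁.symm).mpr ⟨hrpath, hedge⟩
  have hlen := hmax y₁ _ hcyc
  have hW : W.length = q₁.length + (q₂.length + 1) := by
    show (q₁.reverse.append (Walk.cons hss q₂)).length = _
    rw [Walk.length_append, Walk.length_cons, Walk.length_reverse]
  have hr : r.length = p.length + (W.length + 1) := by
    show (p.append (Walk.cons hadj₂ W)).length = _
    rw [Walk.length_append, Walk.length_cons]
  rw [Walk.length_cons, hr, hW] at hlen
  omega

end surgery

end CEaux

/-- Chvátal–Erdős: if `G` is connected, has at least 3 vertices and `α(G) ≤ κ(G)`,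
then `G` has a Hamiltonian cycle. -/
theorem stmt_10 [Fintype V] [DecidableEq V] (G : SimpleGraph V) (hG : G.Connected)
    (hcard : 3 ≤ Fintype.card V)
    (hακ : indepNumOn G Set.univ ≤ vertexConn G) :
    ∃ (u : V) (c : G.Walk u u), c.IsHamiltonianCycle := by
  obtain ⟨x, c, hc, hmax⟩ := exists_longest_cycle G (exists_cycle G hG hcard hακ)
  by_cases hall : ∀ w, w ∈ c.support
  · exact ⟨x, c, spanning_cycle_hamiltonian hc hall⟩
  push_neg at hall
  obtain ⟨v, hv⟩ := hall
  exfalso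
  set N : Set V := {t | t ∈ c.support ∧ ∃ h ∈ Hset c v, G.Adj h t} with hNdef
  -- N is nonempty
  obtain ⟨w0⟩ := hG.preconnected v x
  obtain ⟨n₀, hn₀S, h₀, hh₀, hadj₀, -⟩ := first_hit w0 (Hset_self hv) c.start_mem_support
  have hn₀N : n₀ ∈ N := ⟨hn₀S, h₀, hh₀, hadj₀⟩
  -- the successor of n₀ is in the support but not in N
  have hyS : csucc c n₀ ∈ c.support := csucc_mem hc hn₀S
  have hyN : csucc c n₀ ∉ N := by
    rintro ⟨-, h, hh, hadj⟩
    exact B1 hc hmax hn₀S hh₀ hadj₀ hh hadj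
  -- |N| ≥ κ
  have hNfin : N.Finite := Set.toFinite N
  have hNcard : vertexConn G ≤ N.ncard := by
    by_contra hlt
    push_neg at hlt
    have hcardN : hNfin.toFinset.card = N.ncard := by
      rw [Set.ncard_eq_toFinset_card N hNfin]
    have hconn := vertexConn_spec G (by omega) hNfin.toFinset (by omega)
    have hvmem : v ∈ ((↑hNfin.toFinset : Set V)ᶜ) := by
      simp only [Set.mem_compl_iff, Finset.coe_sort_coe, Set.Finite.coe_toFinset]
      exact fun h => hv h.1
    have hymem : csucc c n₀ ∈ ((↑hNfin.toFinset : Set V)ᶜ) := by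
      simp only [Set.mem_compl_iff, Set.Finite.coe_toFinset]
      exact hyN
    obtain ⟨w, hw⟩ := exists_walk_avoiding hconn hvmem hymem
    obtain ⟨t, htS, h, hh, hadj, htw⟩ := first_hit w (Hset_self hv) hyS
    have := hw t htw
    simp only [Set.mem_compl_iff, Set.Finite.coe_toFinset] at this
    exact this ⟨htS, h, hh, hadj⟩
  -- independent set of size |N| + 1
  set I : Set V := insert v (csucc c '' N) with hIdef
  have hinjOn : Set.InjOn (csucc c) N := fun t₁ h₁ t₂ h₂ h => csucc_inj hc h₁.1 h₂.1 h
  have hvnotmem : v ∉ csucc c '' N := by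
    rintro ⟨t, ht, rfl⟩
    exact hv (csucc_mem hc ht.1)
  have hIcard : I.ncard = N.ncard + 1 := by
    rw [hIdef, Set.ncard_insert_of_notMem hvnotmem (hNfin.image _),
      Set.ncard_image_of_injOn hinjOn]
  have hIindep : I.Pairwise (fun a b => ¬ G.Adj a b) := by
    intro a ha b hb hab
    rw [hIdef, Set.mem_insert_iff] at ha hb
    rcases ha with rfl | ⟨t₁, ht₁, rfl⟩
    · rcases hb with rfl | ⟨t₂, ht₂, rfl⟩
      · exact absurd rfl hab
      · obtain ⟨h₂, hh₂, hadj₂⟩ := ht₂.2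
        exact fun hadj => B1 hc hmax ht₂.1 hh₂ hadj₂ (Hset_self hv) hadj
    · rcases hb with rfl | ⟨t₂, ht₂, rfl⟩
      · obtain ⟨h₁, hh₁, hadj₁⟩ := ht₁.2
        exact fun hadj => B1 hc hmax ht₁.1 hh₁ hadj₁ (Hset_self hv) hadj.symm
      · obtain ⟨h₁, hh₁, hadj₁⟩ := ht₁.2
        obtain ⟨h₂, hh₂, hadj₂⟩ := ht₂.2
        have htne : t₂ ≠ t₁ := fun h => hab (by rw [h])
        exact fun hadj => B2 hc hmax ht₁.1 ht₂.1 htne hh₁ hadj₁ hh₂ hadj₂ hadj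
  have := indep_le_indepNumOn G I hIindep
  omega
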